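/- Let R be a ring and S a finitely presented right R-module of projective dimension at most 1. Put S† = Ext^1_R(S,R). Then S† is a finitely presented left R-module satisfying Hom_R(S†, R) = 0. -/
import Mathlib


/-- Precomposition with `f` on duals, as a map of right `R`-modules
(`Rᵐᵒᵖ`-modules). -/
def dualPrecomp {R : Type*} [Ring R] {M N : Type*}
    [AddCommGroup M] [Module R M] [AddCommGroup N] [Module R N]
    (f : M →ₗ[R] N) : (N →ₗ[R] R) →ₗ[Rᵐᵒᵖ] (M →ₗ[R] R) where
  toFun g := g.comp f
  map_add' g h := by ext; simp
  map_smul' c g := by ext; simp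

lemma eval_eq {R : Type} [Ring R] {k : ℕ} (h : (Fin k → R) →ₗ[R] R)
    (x : Fin k → R) : h x = ∑ i, x i * h (Pi.single i 1) := by
  have hx : x = ∑ i, x i • (Pi.single i 1 : Fin k → R) := by
    funext j
    rw [Finset.sum_apply]
    simp [Pi.single_apply]
  conv_lhs => rw [hx]
  simp [map_sum]

/-- The dual of a finite free module as an `Rᵐᵒᵖ`-module. -/
def dualEquiv (R : Type) [Ring R] (k : ℕ) :
    ((Fin k → R) →ₗ[R] R) ≃ₗ[Rᵐᵒᵖ] (Fin k → Rᵐᵒᵖ) where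
  toFun h := fun i => MulOpposite.op (h (Pi.single i 1))
  map_add' h₁ h₂ := by ext i; simp
  map_smul' c h := by
    ext i
    simp [MulOpposite.smul_eq_mul_unop]
  invFun v :=
    { toFun := fun x => ∑ i, x i * (v i).unop
      map_add' := fun x y => by simp [add_mul, Finset.sum_add_distrib]
      map_smul' := fun r x => by simp [mul_assoc, Finset.mul_sum] }
  left_inv h := by
    ext x
    simp [← eval_eq]
  right_inv v := by
    funext i
    simp [Pi.single_apply, ite_mul, Finset.sum_ite_eq']

lemma psi_eval {R : Type} [Ring R] {k : ℕ}
    (ψ : ((Fin k → R) →ₗ[R] R) →ₗ[Rᵐᵒᵖ] R) (h : (Fin k → R) →ₗ[R] R) :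
    ψ h = h (fun j => ψ (LinearMap.proj j)) := by
  have hh : h = ∑ j, MulOpposite.op (h (Pi.single j 1)) •
      (LinearMap.proj j : (Fin k → R) →ₗ[R] R) := by
    apply LinearMap.ext; intro x
    rw [eval_eq h x]
    simp [MulOpposite.smul_eq_mul_unop]
  conv_lhs => rw [hh]
  rw [map_sum]
  rw [eval_eq h (fun j => ψ (LinearMap.proj j))]
  refine Finset.sum_congr rfl fun j _ => ?_
  rw [map_smul]
  simp [MulOpposite.smul_eq_mul_unop]

/-- Let `R` be a ring and `S` a finitely presented module of
projective dimension at most `1`, given by a projective resolution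
`0 → P₁ = R^m → P₀ = R^n → S → 0` (so `g` is injective and `S ≅ coker g`).
Put `S† = Ext¹_R(S, R)`, which is computed from the resolution as the cokernel
of `g* : P₀* → P₁*` (a module on the other side, here an `Rᵐᵒᵖ`-module).
Then `S†` is finitely presented and satisfies `Hom_R(S†, R) = 0`. -/
theorem ext_dual_fp_and_reflexive_zero (R : Type) [Ring R] (m n : ℕ)
    (g : (Fin m → R) →ₗ[R] (Fin n → R)) (hg : Function.Injective g)
    (S : Type) [AddCommGroup S] [Module R S]
    (pres : S ≃ₗ[R] ((Fin n → R) ⧸ LinearMap.range g)) :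
    Module.FinitePresentation Rᵐᵒᵖ
        (((Fin m → R) →ₗ[R] R) ⧸ LinearMap.range (dualPrecomp g)) ∧
    ∀ φ : (((Fin m → R) →ₗ[R] R) ⧸ LinearMap.range (dualPrecomp g)) →ₗ[Rᵐᵒᵖ] R,
      φ = 0 := by
  constructor
  · -- finite presentation
    have e₀ := dualEquiv R n
    have e₁ := dualEquiv R m
    have hM : Module.FinitePresentation Rᵐᵒᵖ ((Fin m → R) →ₗ[R] R) :=
      Module.finitePresentation_of_surjective (e₁.symm.toLinearMap)
        e₁.symm.surjective (by simpa using Submodule.fg_bot)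
    have hN : Module.Finite Rᵐᵒᵖ ((Fin n → R) →ₗ[R] R) :=
      Module.Finite.of_surjective (e₀.symm.toLinearMap) e₀.symm.surjective
    refine Module.finitePresentation_of_surjective
      (LinearMap.range (dualPrecomp g)).mkQ
      (Submodule.mkQ_surjective _) ?_
    rw [Submodule.ker_mkQ, LinearMap.range_eq_map]
    exact (Module.finite_def.mp hN).map (dualPrecomp g)
  · -- Hom(S†, R) = 0
    intro φ
    set ψ : ((Fin m → R) →ₗ[R] R) →ₗ[Rᵐᵒᵖ] R :=
      φ.comp (LinearMap.range (dualPrecomp g)).mkQ with hψ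
    have hx : (fun j => ψ (LinearMap.proj j)) = (0 : Fin m → R) := by
      apply hg
      rw [map_zero]
      funext i
      have h1 : ψ (dualPrecomp g (LinearMap.proj i)) = 0 := by
        have : (LinearMap.range (dualPrecomp g)).mkQ
            (dualPrecomp g (LinearMap.proj i)) = 0 := by
          rw [← LinearMap.mem_ker, Submodule.ker_mkQ]
          exact LinearMap.mem_range_self _ _
        simp [hψ, this]
      rw [psi_eval] at h1
      simpa [dualPrecomp] using h1
    apply LinearMap.ext
    intro u
    obtain ⟨v, rfl⟩ := Submodule.mkQ_surjective (LinearMap.range (dualPrecomp g)) u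
    have : ψ v = 0 := by rw [psi_eval, hx, map_zero]
    simpa [hψ] using this
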